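/- The three matrix elements arising from the transition v_{0,0,0}⊗v_{1,1,0} ↦ terms under ⟨·⟩₂₂ are: ⟨(a⁺)²⟩₂₂ = x(1-p²)/(1-p²x), ⟨a⁺k⟩₂₂ = 0, ⟨k²⟩₂₂ = (1-x)p/(1-p²x). -/

import Mathlib

noncomputable def aPlus (p : ℝ) (v : ℕ → ℂ) : ℕ → ℂ := fun m =>
  match m with
  | 0 => 0
  | Nat.succ m => ((Real.sqrt (1 - p ^ (2 * m + 2)) : ℝ) : ℂ) * v m

noncomputable def kOp (p : ℝ) (v : ℕ → ℂ) : ℕ → ℂ := fun m =>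
  ((p : ℂ) ^ m * ((Real.sqrt p : ℝ) : ℂ)) * v m

noncomputable def qPoch (a q : ℝ) (m : ℕ) : ℝ := ∏ i ∈ Finset.range m, (1 - a * q ^ i)

noncomputable def chi2 (p x : ℝ) : ℕ → ℂ := fun m =>
  if m % 2 = 0 then
    (x : ℂ) ^ (m / 2) * ((Real.sqrt (qPoch (p ^ 2) (p ^ 2) m) : ℝ) : ℂ)
      / ((qPoch (p ^ 4) (p ^ 4) (m / 2) : ℝ) : ℂ)
  else 0

noncomputable def pairF (f g : ℕ → ℂ) : ℂ := ∑' n : ℕ, f n * g n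

namespace B22

lemma qPoch_succ (a q : ℝ) (m : ℕ) :
    qPoch a q (m+1) = qPoch a q m * (1 - a * q ^ m) := Finset.prod_range_succ _ _

lemma qPoch_pos {a q : ℝ} (ha : 0 ≤ a) (ha1 : a < 1) (hq : 0 ≤ q) (hq1 : q ≤ 1) (m : ℕ) :
    0 < qPoch a q m := by
  refine Finset.prod_pos fun i _ => ?_
  have h1 : a * q ^ i ≤ a * 1 :=
    mul_le_mul_of_nonneg_left (pow_le_one₀ hq hq1) ha
  nlinarith

noncomputable def Pj (p : ℝ) (j : ℕ) : ℝ := qPoch (p^2) (p^4) j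
noncomputable def Qj (p : ℝ) (j : ℕ) : ℝ := qPoch (p^4) (p^4) j
noncomputable def bj (p : ℝ) (j : ℕ) : ℝ := Pj p j / Qj p j

variable {p : ℝ} (hp : 0 < p) (hp1 : p < 1)
include hp hp1

lemma hp2 : (0:ℝ) ≤ p^2 := by positivity
lemma hp2' : p^2 < 1 := by nlinarith
lemma hp4 : (0:ℝ) ≤ p^4 := by positivity
lemma hp4' : p^4 < 1 := by nlinarith [hp2' hp hp1, sq_nonneg p]

lemma Pj_pos (j : ℕ) : 0 < Pj p j :=
  qPoch_pos (hp2 hp hp1) (hp2' hp hp1) (hp4 hp hp1) (hp4' hp hp1).le j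

lemma Qj_pos (j : ℕ) : 0 < Qj p j :=
  qPoch_pos (hp4 hp hp1) (hp4' hp hp1) (hp4 hp hp1) (hp4' hp hp1).le j

lemma Pj_le_Qj (j : ℕ) : Pj p j ≤ Qj p j := by
  rw [Pj, Qj, qPoch, qPoch]
  refine Finset.prod_le_prod (fun i _ => ?_) (fun i _ => ?_)
  · have h1 : p^2 * (p^4) ^ i ≤ p^2 * 1 :=
      mul_le_mul_of_nonneg_left (pow_le_one₀ (hp4 hp hp1) (hp4' hp hp1).le) (hp2 hp hp1)
    nlinarith [hp2' hp hp1]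
  · have h1 : (0:ℝ) ≤ (p^4)^i := pow_nonneg (hp4 hp hp1) i
    have h2 : (0:ℝ) ≤ p^2 - p^4 := by nlinarith [hp2' hp hp1, hp2 hp hp1]
    nlinarith [mul_nonneg h2 h1]

lemma bj_pos (j : ℕ) : 0 < bj p j := div_pos (Pj_pos hp hp1 j) (Qj_pos hp hp1 j)

lemma bj_le_one (j : ℕ) : bj p j ≤ 1 :=
  div_le_one_of_le₀ (Pj_le_Qj hp hp1 j) (Qj_pos hp hp1 j).le

lemma fac_pos (j : ℕ) : 0 < 1 - p^4 * (p^4)^j := by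
  have h1 : p^4 * (p^4) ^ j ≤ p^4 * 1 :=
    mul_le_mul_of_nonneg_left (pow_le_one₀ (hp4 hp hp1) (hp4' hp hp1).le) (hp4 hp hp1)
  nlinarith [hp4' hp hp1]

lemma Q2_eq (j : ℕ) : qPoch (p^2) (p^2) (2*j) = Pj p j * Qj p j := by
  induction j with
  | zero => simp [qPoch, Pj, Qj]
  | succ n ih =>
      have h2 : 2*(n+1) = (2*n+1)+1 := by ring
      rw [h2, qPoch_succ, qPoch_succ, ih]
      simp only [Pj, Qj, qPoch_succ]
      ring

lemma bj_rec (j : ℕ) : bj p (j+1) * (1 - p^4 * (p^4)^j) = bj p j * (1 - p^2 * (p^4)^j) := by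
  have hQ := Qj_pos hp hp1 j
  have hf := fac_pos hp hp1 j
  rw [bj, bj, Pj, Qj, qPoch_succ, qPoch_succ]
  rw [show qPoch (p^2) (p^4) j = Pj p j from rfl, show qPoch (p^4) (p^4) j = Qj p j from rfl]
  field_simp

end B22

namespace B22

noncomputable def F0 (p x : ℝ) (j : ℕ) : ℝ := x^j * bj p j
noncomputable def G0 (p x : ℝ) (j : ℕ) : ℝ := (p^4*x)^j * bj p j

variable {p x : ℝ} (hp : 0 < p) (hp1 : p < 1) (hx : 0 < x) (hx1 : x < 1)
include hp hp1 hx hx1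

lemma summable_F0 : Summable (F0 p x) := by
  refine Summable.of_nonneg_of_le (fun j => ?_) (fun j => ?_)
      (summable_geometric_of_lt_one hx.le hx1)
  · exact mul_nonneg (pow_nonneg hx.le j) (bj_pos hp hp1 j).le
  · calc x^j * bj p j ≤ x^j * 1 :=
          mul_le_mul_of_nonneg_left (bj_le_one hp hp1 j) (pow_nonneg hx.le j)
      _ = x^j := mul_one _

lemma summable_G0 : Summable (G0 p x) := by
  have h0 : (0:ℝ) ≤ p^4*x := by positivity
  have h1 : p^4*x < 1 := by nlinarith [hp4' hp hp1]
  refine Summable.of_nonneg_of_le (fun j => ?_) (fun j => ?_)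
      (summable_geometric_of_lt_one h0 h1)
  · exact mul_nonneg (pow_nonneg h0 j) (bj_pos hp hp1 j).le
  · calc (p^4*x)^j * bj p j ≤ (p^4*x)^j * 1 :=
          mul_le_mul_of_nonneg_left (bj_le_one hp hp1 j) (pow_nonneg h0 j)
      _ = (p^4*x)^j := mul_one _

lemma step_eq (j : ℕ) :
    F0 p x (j+1) - G0 p x (j+1) = x * F0 p x j - p^2*x * G0 p x j := by
  simp only [F0, G0, mul_pow]
  linear_combination (x^j * x * (p^4)^j * 0 + x^(j+1)) * bj_rec hp hp1 j

lemma key_eq :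
    (1 - x) * (∑' j, F0 p x j) = (1 - p^2*x) * (∑' j, G0 p x j) := by
  have hF := summable_F0 hp hp1 hx hx1
  have hG := summable_G0 hp hp1 hx hx1
  have hD : Summable (fun j => F0 p x j - G0 p x j) := hF.sub hG
  have h1 : ∑' j, (F0 p x j - G0 p x j) = (∑' j, F0 p x j) - ∑' j, G0 p x j :=
    Summable.tsum_sub hF hG
  have h2 := Summable.tsum_eq_zero_add hD
  have h0 : F0 p x 0 - G0 p x 0 = 0 := by simp [F0, G0]
  have h3 : ∑' j, (F0 p x (j+1) - G0 p x (j+1)) =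
      ∑' j, (x * F0 p x j - p^2*x * G0 p x j) := by
    congr 1; funext j; exact step_eq hp hp1 hx hx1 j
  have h4 : ∑' j, (x * F0 p x j - p^2*x * G0 p x j) =
      x * (∑' j, F0 p x j) - p^2*x * (∑' j, G0 p x j) := by
    rw [Summable.tsum_sub (hF.mul_left x) (hG.mul_left _), tsum_mul_left, tsum_mul_left]
  have : (∑' j, F0 p x j) - ∑' j, G0 p x j =
      x * (∑' j, F0 p x j) - p^2*x * (∑' j, G0 p x j) := by
    rw [← h4, ← h3, ← h1, h2, h0, zero_add]
  linarith
end B22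

namespace B22

lemma chi2_even (p x : ℝ) (j : ℕ) :
    chi2 p x (2*j) = ((x:ℂ))^j * ((Real.sqrt (qPoch (p^2) (p^2) (2*j)) : ℝ) : ℂ)
      / ((qPoch (p^4) (p^4) j : ℝ) : ℂ) := by
  simp [chi2, Nat.mul_mod_right, Nat.mul_div_cancel_left]

lemma chi2_odd (p x : ℝ) {m : ℕ} (hm : m % 2 = 1) : chi2 p x m = 0 := by
  simp [chi2, hm]

lemma aPlus_succ (p : ℝ) (v : ℕ → ℂ) (m : ℕ) :
    aPlus p v (m+1) = ((Real.sqrt (1 - p ^ (2 * m + 2)) : ℝ) : ℂ) * v m := rfl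

lemma tsum_even (F : ℕ → ℂ) (h : ∀ m, m % 2 = 1 → F m = 0) :
    (∑' n, F n) = ∑' j, F (2*j) := by
  refine (Function.Injective.tsum_eq (g := fun j => 2*j) (fun a b hab => by have : 2*a = 2*b := hab; omega) ?_).symm
  intro n hn
  rcases Nat.even_or_odd n with he | ho
  · obtain ⟨r, hr⟩ := he
    exact ⟨r, show 2*r = n by omega⟩
  · exact absurd (h n (Nat.odd_iff.mp ho)) hn

variable {p x : ℝ} (hp : 0 < p) (hp1 : p < 1) (hx : 0 < x) (hx1 : x < 1)
include hp hp1

lemma Q2_pos (m : ℕ) : 0 < qPoch (p^2) (p^2) m :=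
  qPoch_pos (hp2 hp hp1) (hp2' hp hp1) (hp2 hp hp1) (hp2' hp hp1).le m

lemma fac2_pos (j : ℕ) : 0 < 1 - p^2 * (p^4)^j := by
  have h1 : p^2 * (p^4) ^ j ≤ p^2 * 1 :=
    mul_le_mul_of_nonneg_left (pow_le_one₀ (hp4 hp hp1) (hp4' hp hp1).le) (hp2 hp hp1)
  nlinarith [hp2' hp hp1]

lemma Q2_step (j : ℕ) : qPoch (p^2) (p^2) (2*j+2)
    = qPoch (p^2) (p^2) (2*j) * ((1 - p^2*(p^4)^j) * (1 - p^4*(p^4)^j)) := by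
  rw [show 2*j+2 = (2*j+1)+1 from rfl, qPoch_succ, qPoch_succ]
  ring

omit hp hp1 in
lemma pair_term (W : ℕ → ℂ) (t : ℕ → ℝ) (hodd : ∀ m, m % 2 = 1 → chi2 p x m * W m = 0)
    (hterm : ∀ j, chi2 p x (2*j) * W (2*j) = ((t j : ℝ) : ℂ)) :
    pairF (chi2 p x) W = (((∑' j, t j : ℝ)) : ℂ) := by
  rw [pairF, tsum_even _ hodd]
  rw [Complex.ofReal_tsum]
  congr 1; funext j; exact hterm j

-- term for the identity pairing
lemma term_id (j : ℕ) : chi2 p x (2*j) * chi2 p 1 (2*j) = ((F0 p x j : ℝ) : ℂ) := by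
  rw [chi2_even, chi2_even]
  have hQ2 : 0 < qPoch (p^2) (p^2) (2*j) := Q2_pos hp hp1 _
  have hs : Real.sqrt (qPoch (p^2) (p^2) (2*j)) * Real.sqrt (qPoch (p^2) (p^2) (2*j))
      = qPoch (p^2) (p^2) (2*j) := Real.mul_self_sqrt hQ2.le
  have hQ4 : (qPoch (p^4) (p^4) j) ≠ 0 := (Qj_pos hp hp1 j).ne'
  push_cast
  rw [show ((F0 p x j : ℝ) : ℂ) = ((x^j * (Pj p j / Qj p j) : ℝ) : ℂ) from rfl]
  push_cast
  have hre : x^j * Real.sqrt (qPoch (p^2) (p^2) (2*j)) / qPoch (p^4) (p^4) j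
      * (1^j * Real.sqrt (qPoch (p^2) (p^2) (2*j)) / qPoch (p^4) (p^4) j)
      = x^j * (Pj p j / Qj p j) := by
    have hq2 : qPoch (p^2) (p^2) (2*j) = Pj p j * Qj p j := Q2_eq hp hp1 j
    rw [show qPoch (p^4) (p^4) j = Qj p j from rfl] at *
    field_simp
    linear_combination x ^ j * hs + x^j * hq2
  exact_mod_cast congrArg (fun r : ℝ => (r : ℂ)) hre

end B22

namespace B22

lemma Qj_succ (p : ℝ) (n : ℕ) : Qj p (n+1) = Qj p n * (1 - p^4*(p^4)^n) := qPoch_succ _ _ n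
lemma Pj_succ (p : ℝ) (n : ℕ) : Pj p (n+1) = Pj p n * (1 - p^2*(p^4)^n) := qPoch_succ _ _ n

lemma aPlus_aPlus_even (p : ℝ) (v : ℕ → ℂ) (n : ℕ) :
    aPlus p (aPlus p v) (2*(n+1)) =
      ((Real.sqrt (1 - p^(4*n+4)) : ℝ) : ℂ) *
        (((Real.sqrt (1 - p^(4*n+2)) : ℝ) : ℂ) * v (2*n)) := by
  rw [show 2*(n+1) = (2*n+1)+1 by ring, aPlus_succ, aPlus_succ,
    show 2*(2*n+1)+2 = 4*n+4 by ring, show 2*(2*n)+2 = 4*n+2 by ring]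

variable {p x : ℝ} (hp : 0 < p) (hp1 : p < 1) (hx : 0 < x) (hx1 : x < 1)
include hp hp1

omit hp hp1 in
lemma term_aa_zero : chi2 p x (2*0) * aPlus p (aPlus p (chi2 p 1)) (2*0)
    = (((F0 p x 0 - G0 p x 0 : ℝ)) : ℂ) := by
  simp [show aPlus p (aPlus p (chi2 p 1)) 0 = 0 from rfl, F0, G0]

lemma term_aa_succ (n : ℕ) :
    chi2 p x (2*(n+1)) * aPlus p (aPlus p (chi2 p 1)) (2*(n+1))
      = (((F0 p x (n+1) - G0 p x (n+1) : ℝ)) : ℂ) := by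
  rw [aPlus_aPlus_even, chi2_even, chi2_even]
  have hu : 0 < 1 - p^2*(p^4)^n := fac2_pos hp hp1 n
  have hv : 0 < 1 - p^4*(p^4)^n := fac_pos hp hp1 n
  have hA : 0 < qPoch (p^2) (p^2) (2*n) := Q2_pos hp hp1 _
  have hQn : (0:ℝ) < Qj p n := Qj_pos hp hp1 n
  have hQn' : (0:ℝ) < Qj p (n+1) := Qj_pos hp hp1 (n+1)
  have e1 : (1:ℝ) - p^(4*n+2) = 1 - p^2*(p^4)^n := by ring
  have e2 : (1:ℝ) - p^(4*n+4) = 1 - p^4*(p^4)^n := by ring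
  have hs1 : qPoch (p^2) (p^2) (2*(n+1))
      = qPoch (p^2) (p^2) (2*n) * ((1 - p^2*(p^4)^n) * (1 - p^4*(p^4)^n)) := by
    rw [show 2*(n+1) = 2*n+2 by ring]; exact Q2_step hp hp1 n
  have hre : x^(n+1) * Real.sqrt (qPoch (p^2) (p^2) (2*(n+1))) / Qj p (n+1)
      * (Real.sqrt (1 - p^(4*n+4)) * (Real.sqrt (1 - p^(4*n+2))
        * ((1:ℝ)^n * Real.sqrt (qPoch (p^2) (p^2) (2*n)) / Qj p n)))
      = F0 p x (n+1) - G0 p x (n+1) := by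
    rw [e1, e2, hs1, one_pow]
    set A := qPoch (p^2) (p^2) (2*n) with hAdef
    set u := 1 - p^2*(p^4)^n with hudef
    set v := 1 - p^4*(p^4)^n with hvdef
    have hsu := Real.mul_self_sqrt hu.le
    have hsv := Real.mul_self_sqrt hv.le
    have hsA := Real.mul_self_sqrt hA.le
    have hsplit : Real.sqrt (A*(u*v)) = Real.sqrt A * (Real.sqrt u * Real.sqrt v) := by
      rw [Real.sqrt_mul hA.le, Real.sqrt_mul hu.le]
    have hRHS : F0 p x (n+1) - G0 p x (n+1)
        = x^(n+1) * (A*(u*v)) / (Qj p (n+1) * Qj p n) := by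
      simp only [F0, G0, bj, Pj_succ, Qj_succ, ← hudef, ← hvdef, mul_pow]
      rw [hAdef, Q2_eq hp hp1 n]
      field_simp
      ring
    rw [hRHS, hsplit]
    field_simp
    linear_combination (x*x^n * Real.sqrt u^2 * Real.sqrt v^2) * hsA
      + (x*x^n * A * Real.sqrt v^2) * hsu + (x*x^n * A * u) * hsv
  exact_mod_cast congrArg (fun r : ℝ => (r : ℂ)) hre

lemma term_kk (j : ℕ) : chi2 p x (2*j) * kOp p (kOp p (chi2 p 1)) (2*j)
    = (((p * G0 p x j : ℝ)) : ℂ) := by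
  simp only [kOp]
  rw [chi2_even, chi2_even]
  have hA : 0 < qPoch (p^2) (p^2) (2*j) := Q2_pos hp hp1 _
  have hsA := Real.mul_self_sqrt hA.le
  have hsp := Real.mul_self_sqrt hp.le
  have hQ : (0:ℝ) < Qj p j := Qj_pos hp hp1 j
  have hP : (0:ℝ) < Pj p j := Pj_pos hp hp1 j
  have hsP := Real.mul_self_sqrt hP.le
  have hsQ := Real.mul_self_sqrt hQ.le
  have hre : x^j * Real.sqrt (qPoch (p^2) (p^2) (2*j)) / Qj p j
      * ((p^(2*j) * Real.sqrt p) * ((p^(2*j) * Real.sqrt p)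
        * ((1:ℝ)^j * Real.sqrt (qPoch (p^2) (p^2) (2*j)) / Qj p j)))
      = p * G0 p x j := by
    simp only [G0, bj, one_pow]
    rw [show qPoch (p^2) (p^2) (2*j) = Pj p j * Qj p j from Q2_eq hp hp1 j,
      Real.sqrt_mul hP.le]
    field_simp
    linear_combination (x^j * p^(2*j) * p^(2*j) * Real.sqrt p^2 * Real.sqrt (Qj p j)^2) * hsP
      + (x^j * p^(2*j) * p^(2*j) * Real.sqrt p^2 * Pj p j) * hsQ
      + (x^j * p^(2*j) * p^(2*j) * Pj p j * Qj p j) * hsp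
  exact_mod_cast congrArg (fun r : ℝ => (r : ℂ)) hre

end B22


/-- The matrix elements for the transition `v_{0,0,0}⊗v_{1,1,0}`:
`⟨(a⁺)²⟩₂₂ = x(1-p²)/(1-p²x)`, `⟨a⁺k⟩₂₂ = 0`, `⟨k²⟩₂₂ = (1-x)p/(1-p²x)`
(the second one stated as the vanishing of the numerator pairing). -/
theorem bracket22_values (p x : ℝ) (hp : 0 < p) (hp1 : p < 1) (hx : 0 < x) (hx1 : x < 1) :
    pairF (chi2 p x) (aPlus p (aPlus p (chi2 p 1))) =
        (((x * (1 - p ^ 2) / (1 - p ^ 2 * x) : ℝ)) : ℂ) * pairF (chi2 p x) (chi2 p 1) ∧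
    pairF (chi2 p x) (aPlus p (kOp p (chi2 p 1))) = 0 ∧
    pairF (chi2 p x) (kOp p (kOp p (chi2 p 1))) =
        ((((1 - x) * p / (1 - p ^ 2 * x) : ℝ)) : ℂ) * pairF (chi2 p x) (chi2 p 1) := by
  have hF := B22.summable_F0 hp hp1 hx hx1
  have hG := B22.summable_G0 hp hp1 hx hx1
  have hkey := B22.key_eq hp hp1 hx hx1
  have hden : (0:ℝ) < 1 - p^2*x := by nlinarith [B22.hp2' hp hp1]
  have hid : pairF (chi2 p x) (chi2 p 1) = (((∑' j, B22.F0 p x j : ℝ)) : ℂ) :=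
    B22.pair_term _ _ (fun m hm => by rw [B22.chi2_odd p x hm, zero_mul])
      (fun j => B22.term_id hp hp1 j)
  have haa : pairF (chi2 p x) (aPlus p (aPlus p (chi2 p 1)))
      = ((((∑' j, B22.F0 p x j) - (∑' j, B22.G0 p x j) : ℝ)) : ℂ) := by
    have h := B22.pair_term (aPlus p (aPlus p (chi2 p 1)))
      (fun j => B22.F0 p x j - B22.G0 p x j)
      (fun m hm => by rw [B22.chi2_odd p x hm, zero_mul])
      (fun j => by
        cases j with
        | zero => exact B22.term_aa_zero
        | succ n => exact B22.term_aa_succ hp hp1 n)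
    rw [h, Summable.tsum_sub hF hG]
  have hkk : pairF (chi2 p x) (kOp p (kOp p (chi2 p 1)))
      = (((p * ∑' j, B22.G0 p x j : ℝ)) : ℂ) := by
    have h := B22.pair_term (kOp p (kOp p (chi2 p 1))) (fun j => p * B22.G0 p x j)
      (fun m hm => by rw [B22.chi2_odd p x hm, zero_mul])
      (fun j => B22.term_kk hp hp1 j)
    rw [h, tsum_mul_left]
  have hmid : pairF (chi2 p x) (aPlus p (kOp p (chi2 p 1))) = 0 := by
    rw [pairF]
    convert tsum_zero with n
    match n with
    | 0 => simp [show aPlus p (kOp p (chi2 p 1)) 0 = 0 from rfl]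
    | Nat.succ m =>
      rcases Nat.even_or_odd m with he | ho
      · obtain ⟨r, hr⟩ := he
        have hm : (m+1) % 2 = 1 := by omega
        rw [B22.chi2_odd p x hm, zero_mul]
      · have hm : m % 2 = 1 := Nat.odd_iff.mp ho
        rw [B22.aPlus_succ]
        simp [kOp, B22.chi2_odd p 1 hm]
  refine ⟨?_, hmid, ?_⟩
  · rw [haa, hid, ← Complex.ofReal_mul]
    norm_cast
    field_simp
    rw [eq_div_iff (by nlinarith)]
    linear_combination hkey
  · rw [hkk, hid, ← Complex.ofReal_mul]
    norm_cast
    field_simp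
    linear_combination -hkey
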